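/- Let H₁, H₂, H₃ be complex Hilbert spaces, let T₁ : H₁ → H₂ be a continuous linear operator, and let T₂ be a closed densely defined unbounded linear operator from H₁ to H₃ (a linear map defined on a dense subspace Dom(T₂) ⊆ H₁ whose graph is closed). Let F be a closed subspace of H₂, and suppose T₁(Ker(T₂)) = F, where Ker(T₂) = { h ∈ Dom(T₂) : T₂ h = 0 }. Then there exists a constant c > 0 such that c‖u‖ ≤ ‖T₁* u + T₂* v‖ for every u ∈ F and every v ∈ Dom(T₂*) that is orthogonal to Ker(T₂*) = { w ∈ Dom(T₂*) : T₂* w = 0 }, where T₁* is the Hilbert adjoint of T₁ and T₂* is the adjoint of T₂. -/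

import Mathlib

open scoped InnerProductSpace

/-- **Skoda's functional-analysis lemma (necessity).**
If `T₁(Ker T₂) = F` for a closed subspace `F`, then there is `c > 0` with
`c‖u‖ ≤ ‖T₁* u + T₂* v‖` for all `u ∈ F` and all `v ∈ Dom(T₂*)` orthogonal to
`Ker(T₂*)`. -/
theorem skoda_functional_lemma_necessity
    {H₁ H₂ H₃ : Type*}
    [NormedAddCommGroup H₁] [InnerProductSpace ℂ H₁] [CompleteSpace H₁]
    [NormedAddCommGroup H₂] [InnerProductSpace ℂ H₂] [CompleteSpace H₂]
    [NormedAddCommGroup H₃] [InnerProductSpace ℂ H₃] [CompleteSpace H₃]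
    (T₁ : H₁ →L[ℂ] H₂) (T₂ : H₁ →ₗ.[ℂ] H₃)
    (hdense : Dense (T₂.domain : Set H₁)) (hclosed : T₂.IsClosed)
    (F : Submodule ℂ H₂) (hF : IsClosed (F : Set H₂))
    (hsurj : T₁ '' {x : H₁ | ∃ hx : x ∈ T₂.domain, T₂ ⟨x, hx⟩ = 0} = (F : Set H₂)) :
    ∃ c : ℝ, 0 < c ∧ ∀ u ∈ F, ∀ v : T₂.adjoint.domain,
      (∀ w : T₂.adjoint.domain, T₂.adjoint w = 0 → (inner ℂ (v : H₃) (w : H₃) : ℂ) = 0) →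
      c * ‖u‖ ≤ ‖ContinuousLinearMap.adjoint T₁ u + T₂.adjoint v‖ := by
  classical
  -- The kernel of T₂ as a submodule of H₁
  set K : Submodule ℂ H₁ := T₂.graph.comap (LinearMap.inl ℂ H₁ H₃) with hKdef
  have hKmem : ∀ x : H₁, x ∈ K ↔ ∃ hx : x ∈ T₂.domain, T₂ ⟨x, hx⟩ = 0 := by
    intro x
    constructor
    · intro hx
      rw [hKdef, Submodule.mem_comap] at hx
      simp only [LinearMap.inl_apply, LinearPMap.mem_graph_iff] at hx
      obtain ⟨y, hy1, hy2⟩ := hx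
      refine ⟨hy1 ▸ y.2, ?_⟩
      convert hy2 using 2
      exact Subtype.ext hy1.symm
    · rintro ⟨hx, hx0⟩
      rw [hKdef, Submodule.mem_comap]
      simp only [LinearMap.inl_apply, LinearPMap.mem_graph_iff]
      exact ⟨⟨x, hx⟩, rfl, hx0⟩
  have hKclosed : IsClosed (K : Set H₁) := by
    have : (K : Set H₁) = (fun x : H₁ => (x, (0 : H₃))) ⁻¹' (T₂.graph : Set (H₁ × H₃)) := by
      ext x; simp [hKdef, Submodule.mem_comap]
    rw [this]
    exact hclosed.preimage (Continuous.prodMk continuous_id continuous_const)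
  haveI : CompleteSpace K := hKclosed.completeSpace_coe
  haveI : CompleteSpace F := hF.completeSpace_coe
  -- The restriction of T₁ to K, viewed as a map into F
  have hmaps : ∀ x : K, T₁ (x : H₁) ∈ F := by
    intro x
    have : T₁ (x : H₁) ∈ T₁ '' {x : H₁ | ∃ hx : x ∈ T₂.domain, T₂ ⟨x, hx⟩ = 0} :=
      ⟨x, (hKmem x).mp x.2, rfl⟩
    rwa [hsurj] at this
  set f : K →L[ℂ] F :=
    ContinuousLinearMap.codRestrict (T₁.comp K.subtypeL) F hmaps with hfdef
  have hfsurj : Function.Surjective f := by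
    rintro ⟨u, hu⟩
    have : u ∈ T₁ '' {x : H₁ | ∃ hx : x ∈ T₂.domain, T₂ ⟨x, hx⟩ = 0} := hsurj ▸ hu
    obtain ⟨x, hxmem, hxu⟩ := this
    exact ⟨⟨x, (hKmem x).mpr hxmem⟩, Subtype.ext hxu⟩
  obtain ⟨C, hC, hCx⟩ := f.exists_preimage_norm_le hfsurj
  refine ⟨C⁻¹, inv_pos.mpr hC, ?_⟩
  intro u hu v _
  obtain ⟨h, hfh, hnorm⟩ := hCx ⟨u, hu⟩
  obtain ⟨hdom, hT0⟩ := (hKmem (h : H₁)).mp h.2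
  -- key inner product computation
  have hT1h : T₁ (h : H₁) = u := congrArg Subtype.val hfh
  have hadj : (inner ℂ (T₂.adjoint v) ((h : H₁)) : ℂ) = 0 := by
    have := (T₂.adjoint_isFormalAdjoint hdense) v ⟨(h : H₁), hdom⟩
    simp only [hT0, inner_zero_right] at this
    exact this
  have hkey : (inner ℂ (ContinuousLinearMap.adjoint T₁ u + T₂.adjoint v) ((h : H₁)) : ℂ)
      = (‖u‖ : ℂ) ^ 2 := by
    rw [inner_add_left, hadj, add_zero, ContinuousLinearMap.adjoint_inner_left, hT1h,
      inner_self_eq_norm_sq_to_K]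
    norm_cast
  have hbound : ‖u‖ ^ 2 ≤ ‖ContinuousLinearMap.adjoint T₁ u + T₂.adjoint v‖ * (C * ‖u‖) := by
    have h1 : ‖(inner ℂ (ContinuousLinearMap.adjoint T₁ u + T₂.adjoint v) ((h : H₁)) : ℂ)‖
        ≤ ‖ContinuousLinearMap.adjoint T₁ u + T₂.adjoint v‖ * ‖(h : H₁)‖ := norm_inner_le_norm _ _
    rw [hkey] at h1
    have h2 : ‖((‖u‖ : ℂ)) ^ 2‖ = ‖u‖ ^ 2 := by
      simp [norm_pow]
    rw [h2] at h1
    have hnorm' : ‖(h : H₁)‖ = ‖h‖ := rfl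
    have hFu : ‖(⟨u, hu⟩ : F)‖ = ‖u‖ := rfl
    calc ‖u‖ ^ 2 ≤ ‖ContinuousLinearMap.adjoint T₁ u + T₂.adjoint v‖ * ‖(h : H₁)‖ := h1
      _ ≤ ‖ContinuousLinearMap.adjoint T₁ u + T₂.adjoint v‖ * (C * ‖u‖) := by
          apply mul_le_mul_of_nonneg_left _ (norm_nonneg _)
          rw [hnorm', ← hFu]; exact hnorm
  rcases eq_or_lt_of_le (norm_nonneg u) with h0 | h0
  · simp [← h0]
  · rw [inv_mul_le_iff₀ hC, ← mul_le_mul_iff_of_pos_right h0]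
    calc ‖u‖ * ‖u‖ = ‖u‖ ^ 2 := (sq ‖u‖).symm
      _ ≤ ‖ContinuousLinearMap.adjoint T₁ u + T₂.adjoint v‖ * (C * ‖u‖) := hbound
      _ = C * ‖ContinuousLinearMap.adjoint T₁ u + T₂.adjoint v‖ * ‖u‖ := by ring
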